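/- Let p be a prime. Then the intersection of two p-normal sets in ℤ is again a p-normal set in ℤ. -/

import Mathlib

/-- An elementary `p`-normal subset of `ℤ`: a set of the form
`{x : ℤ | ∃ n₁, …, n_d ∈ ℕ, (q-1)·x = c₀ + c₁·q^{n₁} + ⋯ + c_d·q^{n_d}}`, where `q = p^e`
with `e ≥ 1`, `d ≥ 1`, and the integers `c₀, …, c_d` satisfy `(q-1) ∣ (c₀ + c₁ + ⋯ + c_d)`. -/
def IsElemPNormal (p : ℕ) (S : Set ℤ) : Prop :=
  ∃ (e d : ℕ) (c : ℕ → ℤ), 1 ≤ e ∧ 1 ≤ d ∧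
    ((((p : ℤ) ^ e) - 1) ∣ ∑ i ∈ Finset.range (d + 1), c i) ∧
    S = {x : ℤ | ∃ n : Fin d → ℕ,
      (((p : ℤ) ^ e) - 1) * x = c 0 + ∑ i : Fin d, c (i + 1) * ((p : ℤ) ^ e) ^ (n i)}

/-- A `p`-normal set in `ℤ`: a union of finitely many arithmetic progressions in `ℤ`
(sets of the form `{m·k + l | k ∈ ℤ}`) along with finitely many elementary `p`-normal
subsets of `ℤ` (the union may be empty). -/
def IsPNormalZ (p : ℕ) (S : Set ℤ) : Prop :=
  ∃ (F : Finset (ℤ × ℤ)) (N : ℕ) (T : Fin N → Set ℤ),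
    (∀ i, IsElemPNormal p (T i)) ∧
    S = (⋃ q ∈ F, {x : ℤ | ∃ k : ℤ, x = q.1 * k + q.2}) ∪ ⋃ i, T i

namespace PNAux


def AP (m l : ℤ) : Set ℤ := {x : ℤ | ∃ k : ℤ, x = m * k + l}

lemma mem_AP {m l x : ℤ} : x ∈ AP m l ↔ m ∣ x - l := by
  constructor
  · rintro ⟨k, rfl⟩; exact ⟨k, by ring⟩
  · rintro ⟨k, hk⟩; exact ⟨k, by linarith⟩

def Elem (q : ℤ) {ι : Type} [Fintype ι] (c0 : ℤ) (c : ι → ℤ) : Set ℤ :=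
  {x : ℤ | ∃ n : ι → ℕ, (q - 1) * x = c0 + ∑ i, c i * q ^ n i}

def uG (q : ℤ) (t : ℕ) : ℤ := ∑ l ∈ Finset.range t, q ^ l

lemma uG_mul (q : ℤ) (t : ℕ) : uG q t * (q - 1) = q ^ t - 1 := geom_sum_mul q t

lemma uG_pos {q : ℤ} (hq : 2 ≤ q) {t : ℕ} (ht : 1 ≤ t) : 0 < uG q t :=
  Finset.sum_pos (fun l _ => pow_pos (by linarith) l)
    (Finset.nonempty_range_iff.mpr (by omega))

lemma sub_one_dvd_pow (q : ℤ) (e : ℕ) : (q - 1) ∣ q ^ e - 1 :=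
  ⟨∑ l ∈ Finset.range e, q ^ l, by rw [← geom_sum_mul q e]; ring⟩

lemma dvd_shift (q a0 : ℤ) {ι : Type} [Fintype ι] (a : ι → ℤ) (e : ι → ℕ)
    (hdvd : (q - 1) ∣ a0 + ∑ i, a i) : (q - 1) ∣ a0 + ∑ i, a i * q ^ e i := by
  have h1 : ∑ i, a i * (q ^ e i - 1) = (∑ i, a i * q ^ e i) - ∑ i, a i := by
    rw [← Finset.sum_sub_distrib]; exact Finset.sum_congr rfl fun i _ => by ring
  have h2 : a0 + ∑ i, a i * q ^ e i = (a0 + ∑ i, a i) + ∑ i, a i * (q ^ e i - 1) := by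
    rw [h1]; ring
  rw [h2]
  exact dvd_add hdvd (Finset.dvd_sum fun i _ => (sub_one_dvd_pow q (e i)).mul_left _)



def shE (V t : ℕ) (z : Fin V ⊕ Fin t) : ℕ :=
  match z with
  | .inl v => (v : ℕ)
  | .inr r => V + (r : ℕ)

@[simp] lemma shE_inl (V t : ℕ) (v : Fin V) : shE V t (.inl v) = (v : ℕ) := rfl
@[simp] lemma shE_inr (V t : ℕ) (r : Fin t) : shE V t (.inr r) = V + (r : ℕ) := rfl

def lPart (q : ℤ) (V t : ℕ) (ci : ℤ) (z : Fin V ⊕ Fin t) : ℤ :=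
  match z with
  | .inl v => uG q t * ci * q ^ (v : ℕ)
  | .inr _ => 0

def rPart (q : ℤ) (V t : ℕ) (ci : ℤ) (z : Fin V ⊕ Fin t) : ℤ :=
  match z with
  | .inl _ => 0
  | .inr r => uG q t * ci * q ^ (V + (r : ℕ))

@[simp] lemma lPart_inl (q : ℤ) (V t : ℕ) (ci : ℤ) (v : Fin V) :
    lPart q V t ci (.inl v) = uG q t * ci * q ^ (v : ℕ) := rfl
@[simp] lemma lPart_inr (q : ℤ) (V t : ℕ) (ci : ℤ) (r : Fin t) :
    lPart q V t ci (.inr r) = 0 := rfl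
@[simp] lemma rPart_inl (q : ℤ) (V t : ℕ) (ci : ℤ) (v : Fin V) :
    rPart q V t ci (.inl v) = 0 := rfl
@[simp] lemma rPart_inr (q : ℤ) (V t : ℕ) (ci : ℤ) (r : Fin t) :
    rPart q V t ci (.inr r) = uG q t * ci * q ^ (V + (r : ℕ)) := rfl

def C0v (q : ℤ) (V t : ℕ) {d : ℕ} (c0 : ℤ) (c : Fin d → ℤ)
    (σ : Fin d → Fin V ⊕ Fin t) : ℤ :=
  uG q t * c0 + ∑ i, lPart q V t (c i) (σ i)

def CCv (q : ℤ) (V t : ℕ) {d : ℕ} (c : Fin d → ℤ)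
    (σ : Fin d → Fin V ⊕ Fin t) (i : Fin d) : ℤ :=
  rPart q V t (c i) (σ i)

lemma master_identity (q : ℤ) (V t : ℕ) {d : ℕ} (c0 : ℤ) (c : Fin d → ℤ)
    (σ : Fin d → Fin V ⊕ Fin t) (m : Fin d → ℕ) (hm : ∀ i, (σ i).isLeft → m i = 0) :
    uG q t * (c0 + ∑ i, c i * q ^ (shE V t (σ i) + t * m i)) =
      C0v q V t c0 c σ + ∑ i, CCv q V t c σ i * (q ^ t) ^ m i := by
  rw [mul_add, Finset.mul_sum, C0v, add_assoc, ← Finset.sum_add_distrib]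
  congr 1
  apply Finset.sum_congr rfl
  intro i _
  rcases h : σ i with v | r
  · have hm0 : m i = 0 := hm i (by rw [h]; rfl)
    rw [CCv, h, shE_inl, lPart_inl, rPart_inl, hm0, Nat.mul_zero, Nat.add_zero]
    ring
  · rw [CCv, h, shE_inr, lPart_inr, rPart_inr, pow_add, pow_mul]
    ring

lemma elem_per (q M : ℤ) (V t : ℕ) (hper : M ∣ q ^ (V + t) - q ^ V) (b k : ℕ) :
    M ∣ q ^ (V + b + t * k) - q ^ (V + b) := by
  induction k with
  | zero => simp
  | succ k ih =>
    have key : q ^ (V + b + t * (k + 1)) - q ^ (V + b) =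
        q ^ (b + t * k) * (q ^ (V + t) - q ^ V) + (q ^ (V + b + t * k) - q ^ (V + b)) := by
      have e1 : V + b + t * (k + 1) = (b + t * k) + (V + t) := by ring
      have e2 : V + b + t * k = (b + t * k) + V := by ring
      rw [e1, e2, pow_add, pow_add]; ring
    rw [key]
    exact dvd_add (hper.mul_left _) ih

lemma master_cong (q M : ℤ) (V t : ℕ) (hper : M ∣ q ^ (V + t) - q ^ V) {d : ℕ}
    (c : Fin d → ℤ) (σ : Fin d → Fin V ⊕ Fin t) (m : Fin d → ℕ)
    (hm : ∀ i, (σ i).isLeft → m i = 0) :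
    M ∣ (∑ i, c i * q ^ (shE V t (σ i) + t * m i)) - ∑ i, c i * q ^ shE V t (σ i) := by
  rw [← Finset.sum_sub_distrib]
  apply Finset.dvd_sum
  intro i _
  have e : c i * q ^ (shE V t (σ i) + t * m i) - c i * q ^ shE V t (σ i) =
      c i * (q ^ (shE V t (σ i) + t * m i) - q ^ shE V t (σ i)) := by ring
  rw [e]
  apply Dvd.dvd.mul_left _ (c i)
  rcases h : σ i with v | r
  · rw [hm i (by rw [h]; rfl)]
    simp
  · rw [shE_inr]
    exact elem_per q M V t hper r (m i)

lemma shape_decomp (V t : ℕ) (ht : 1 ≤ t) (nn : ℕ) :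
    ∃ (z : Fin V ⊕ Fin t) (k : ℕ), nn = shE V t z + t * k ∧ (z.isLeft → k = 0) := by
  by_cases h : nn < V
  · exact ⟨Sum.inl ⟨nn, h⟩, 0, by simp [shE], fun _ => rfl⟩
  · refine ⟨Sum.inr ⟨(nn - V) % t, Nat.mod_lt _ (by omega)⟩, (nn - V) / t, ?_, by simp⟩
    have hmd := Nat.mod_add_div (nn - V) t
    simp only [shE]
    omega

lemma master (q : ℤ) (hq : 2 ≤ q) {d : ℕ} (c0 : ℤ) (c : Fin d → ℤ) (M w : ℤ)
    (V t : ℕ) (ht : 1 ≤ t) (hper : M ∣ q ^ (V + t) - q ^ V) :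
    Elem q c0 c ∩ {x : ℤ | M ∣ ((q - 1) * x - w)} =
      ⋃ σ : Fin d → Fin V ⊕ Fin t,
        ⋃ (_ : M ∣ (c0 + (∑ i, c i * q ^ shE V t (σ i)) - w)),
          Elem (q ^ t) (C0v q V t c0 c σ) (CCv q V t c σ) := by
  have hu : uG q t ≠ 0 := ne_of_gt (uG_pos hq ht)
  ext x
  simp only [Set.mem_inter_iff, Set.mem_iUnion, Elem, Set.mem_setOf_eq]
  constructor
  · rintro ⟨⟨n, hn⟩, hMx⟩
    choose z k hzk hleft using fun i => shape_decomp V t ht (n i)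
    have h3 : ∑ i, c i * q ^ n i = ∑ i, c i * q ^ (shE V t (z i) + t * k i) :=
      Finset.sum_congr rfl fun i _ => by rw [← hzk i]
    have hgood : M ∣ (c0 + (∑ i, c i * q ^ shE V t (z i)) - w) := by
      have h1 : M ∣ ((c0 + ∑ i, c i * q ^ (shE V t (z i) + t * k i)) - w) := by
        rw [← h3, ← hn]; exact hMx
      have h2 := master_cong q M V t hper c z k hleft
      have e : c0 + (∑ i, c i * q ^ shE V t (z i)) - w =
          (c0 + (∑ i, c i * q ^ (shE V t (z i) + t * k i)) - w) -
            ((∑ i, c i * q ^ (shE V t (z i) + t * k i)) - ∑ i, c i * q ^ shE V t (z i)) := by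
        ring
      rw [e]; exact dvd_sub h1 h2
    refine ⟨z, hgood, k, ?_⟩
    calc (q ^ t - 1) * x = uG q t * ((q - 1) * x) := by rw [← uG_mul q t]; ring
      _ = uG q t * (c0 + ∑ i, c i * q ^ (shE V t (z i) + t * k i)) := by rw [hn, h3]
      _ = _ := master_identity q V t c0 c z k hleft
  · rintro ⟨z, hgood, m, hm⟩
    classical
    set m' : Fin d → ℕ := fun i => if (z i).isLeft then 0 else m i with hm'def
    have hleft : ∀ i, (z i).isLeft → m' i = 0 := fun i h => by simp [hm'def, h]
    have hCC : ∀ i, CCv q V t c z i * (q ^ t) ^ (m i) = CCv q V t c z i * (q ^ t) ^ (m' i) := by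
      intro i
      rcases h : z i with v | r
      · simp [CCv, h]
      · have : m' i = m i := by
          simp [hm'def, h]
        rw [this]
    have hm2 : (q ^ t - 1) * x = C0v q V t c0 c z + ∑ i, CCv q V t c z i * (q ^ t) ^ m' i := by
      rw [hm]; congr 1
      exact Finset.sum_congr rfl fun i _ => hCC i
    have heq : uG q t * ((q - 1) * x) =
        uG q t * (c0 + ∑ i, c i * q ^ (shE V t (z i) + t * m' i)) := by
      have h1 : uG q t * ((q - 1) * x) = (q ^ t - 1) * x := by rw [← uG_mul q t]; ring
      rw [h1, hm2, master_identity q V t c0 c z m' hleft]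
    have hxeq : (q - 1) * x = c0 + ∑ i, c i * q ^ (shE V t (z i) + t * m' i) :=
      mul_left_cancel₀ hu heq
    constructor
    · exact ⟨fun i => shE V t (z i) + t * m' i, hxeq⟩
    · have h2 := master_cong q M V t hper c z m' hleft
      have e : (q - 1) * x - w = (c0 + (∑ i, c i * q ^ shE V t (z i)) - w) +
          ((∑ i, c i * q ^ (shE V t (z i) + t * m' i)) - ∑ i, c i * q ^ shE V t (z i)) := by
        rw [hxeq]; ring
      rw [e]; exact dvd_add hgood h2

lemma master_dvd (q : ℤ) {d : ℕ} (c0 : ℤ) (c : Fin d → ℤ) (V t : ℕ)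
    (hdvd : (q - 1) ∣ c0 + ∑ i, c i) (σ : Fin d → Fin V ⊕ Fin t) :
    (q ^ t - 1) ∣ C0v q V t c0 c σ + ∑ i, CCv q V t c σ i := by
  have h0 := master_identity q V t c0 c σ (fun _ => 0) (fun _ _ => rfl)
  simp only [Nat.mul_zero, Nat.add_zero, pow_zero, mul_one] at h0
  rw [← h0, ← uG_mul q t, mul_comm (uG q t) (q - 1)]
  rw [mul_comm (uG q t) _]
  apply mul_dvd_mul_right
  exact dvd_shift q c0 c _ hdvd

lemma exists_period (q M : ℤ) (hM : M ≠ 0) : ∃ V t : ℕ, 1 ≤ t ∧ M ∣ q ^ (V + t) - q ^ V := by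
  haveI : NeZero M.natAbs := ⟨by simpa using hM⟩
  have main : ∀ a b : Fin (M.natAbs + 1), (a : ℕ) < (b : ℕ) →
      ((q : ZMod M.natAbs) ^ (a : ℕ) = (q : ZMod M.natAbs) ^ (b : ℕ)) →
      ∃ V t : ℕ, 1 ≤ t ∧ M ∣ q ^ (V + t) - q ^ V := by
    intro a b hab he
    refine ⟨a, b - a, by omega, ?_⟩
    have hba : (a : ℕ) + ((b : ℕ) - (a : ℕ)) = (b : ℕ) := by omega
    rw [hba]
    have hz : ((q ^ (b : ℕ) - q ^ (a : ℕ) : ℤ) : ZMod M.natAbs) = 0 := by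
      push_cast
      rw [← he, sub_self]
    rw [ZMod.intCast_zmod_eq_zero_iff_dvd] at hz
    exact Int.natAbs_dvd.mp hz
  obtain ⟨i, j, hij, hfe⟩ := Fintype.exists_ne_map_eq_of_card_lt
    (fun i : Fin (M.natAbs + 1) => (q : ZMod M.natAbs) ^ (i : ℕ)) (by simp [ZMod.card])
  rcases lt_or_gt_of_ne (fun h : (i : ℕ) = (j : ℕ) => hij (Fin.ext h)) with h | h
  · exact main i j h hfe
  · exact main j i h hfe.symm



lemma isElemPNormal_iff {p : ℕ} {S : Set ℤ} :
    IsElemPNormal p S ↔ ∃ (e d : ℕ) (c0 : ℤ) (c : Fin d → ℤ), 1 ≤ e ∧ 1 ≤ d ∧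
      ((((p : ℤ) ^ e) - 1) ∣ c0 + ∑ i, c i) ∧ S = Elem ((p : ℤ) ^ e) c0 c := by
  constructor
  · rintro ⟨e, d, c, he, hd, hdvd, rfl⟩
    refine ⟨e, d, c 0, fun i => c (i + 1), he, hd, ?_, ?_⟩
    · have h : ∑ i ∈ Finset.range (d + 1), c i = c 0 + ∑ i : Fin d, c (i + 1) := by
        rw [Finset.sum_range_succ' c d, Finset.sum_range]; exact add_comm _ _
      rwa [h] at hdvd
    · rfl
  · rintro ⟨e, d, c0, c, he, hd, hdvd, rfl⟩
    refine ⟨e, d, fun nn => if nn = 0 then c0 else if h : nn - 1 < d then c ⟨nn - 1, h⟩ else 0,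
      he, hd, ?_, ?_⟩
    · have h : ∑ i ∈ Finset.range (d + 1),
          (fun nn => if nn = 0 then c0 else if h : nn - 1 < d then c ⟨nn - 1, h⟩ else 0) i
          = c0 + ∑ i : Fin d, c i := by
        rw [Finset.sum_range_succ' _ d, Finset.sum_range]
        simp
        exact add_comm _ _
      rwa [h]
    · have h0 : ∀ i : Fin d,
          (fun nn => if nn = 0 then c0 else if h : nn - 1 < d then c ⟨nn - 1, h⟩ else 0) ((i : ℕ) + 1) = c i := by
        intro i; simp
      ext x
      simp only [Elem, Set.mem_setOf_eq, h0]
      rfl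

lemma pn_empty (p : ℕ) : IsPNormalZ p (∅ : Set ℤ) :=
  ⟨∅, 0, fun i => i.elim0, fun i => i.elim0, by simp⟩

lemma pn_ap (p : ℕ) (m l : ℤ) : IsPNormalZ p (AP m l) :=
  ⟨{(m, l)}, 0, fun i => i.elim0, fun i => i.elim0, by simp [AP]⟩

lemma pn_elem {p : ℕ} {S : Set ℤ} (h : IsElemPNormal p S) : IsPNormalZ p S :=
  ⟨∅, 1, fun _ => S, fun _ => h, by simp [Set.iUnion_const]⟩

lemma pn_union {p : ℕ} {S T : Set ℤ} (h1 : IsPNormalZ p S) (h2 : IsPNormalZ p T) :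
    IsPNormalZ p (S ∪ T) := by
  obtain ⟨F1, N1, T1, hT1, rfl⟩ := h1
  obtain ⟨F2, N2, T2, hT2, rfl⟩ := h2
  refine ⟨F1 ∪ F2, N1 + N2, Fin.append T1 T2, ?_, ?_⟩
  · intro i
    refine Fin.addCases (motive := fun i => IsElemPNormal p (Fin.append T1 T2 i))
      (fun i => ?_) (fun i => ?_) i
    · show IsElemPNormal p (Fin.append T1 T2 (Fin.castAdd N2 i))
      rw [Fin.append_left]; exact hT1 i
    · show IsElemPNormal p (Fin.append T1 T2 (Fin.natAdd N1 i))
      rw [Fin.append_right]; exact hT2 i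
  · have hA : (⋃ i, Fin.append T1 T2 i) = (⋃ i, T1 i) ∪ ⋃ i, T2 i := by
      apply Set.Subset.antisymm
      · refine Set.iUnion_subset ?_
        intro i
        refine Fin.addCases (motive := fun i => Fin.append T1 T2 i ⊆ (⋃ i, T1 i) ∪ ⋃ i, T2 i)
          (fun i => ?_) (fun i => ?_) i
        · show Fin.append T1 T2 (Fin.castAdd N2 i) ⊆ _
          rw [Fin.append_left]
          exact Set.subset_union_of_subset_left (Set.subset_iUnion T1 i) _
        · show Fin.append T1 T2 (Fin.natAdd N1 i) ⊆ _
          rw [Fin.append_right]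
          exact Set.subset_union_of_subset_right (Set.subset_iUnion T2 i) _
      · refine Set.union_subset (Set.iUnion_subset fun i => ?_) (Set.iUnion_subset fun i => ?_)
        · exact Set.subset_iUnion_of_subset (Fin.castAdd N2 i) (le_of_eq (Fin.append_left T1 T2 i).symm)
        · exact Set.subset_iUnion_of_subset (Fin.natAdd N1 i) (le_of_eq (Fin.append_right T1 T2 i).symm)
    rw [hA, Finset.set_biUnion_union]
    ext x
    simp only [Set.mem_union]
    tauto

lemma pn_biUnionF {p : ℕ} {α : Type*} (s : Finset α) (f : α → Set ℤ)
    (h : ∀ a ∈ s, IsPNormalZ p (f a)) : IsPNormalZ p (⋃ a ∈ s, f a) := by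
  classical
  induction s using Finset.induction_on with
  | empty => simpa using pn_empty p
  | @insert a s ha ih =>
    rw [Finset.set_biUnion_insert]
    exact pn_union (h _ (Finset.mem_insert_self _ _))
      (ih fun b hb => h b (Finset.mem_insert_of_mem hb))

lemma pn_iUnion {p : ℕ} {ι : Type*} [Fintype ι] {f : ι → Set ℤ}
    (h : ∀ i, IsPNormalZ p (f i)) : IsPNormalZ p (⋃ i, f i) := by
  have e : (⋃ i, f i) = ⋃ i ∈ Finset.univ, f i := by simp
  rw [e]; exact pn_biUnionF _ _ fun a _ => h a

lemma pn_iUnion_prop {p : ℕ} {P : Prop} {S : Set ℤ} (h : IsPNormalZ p S) :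
    IsPNormalZ p (⋃ (_ : P), S) := by
  by_cases hP : P
  · have e : (⋃ (_ : P), S) = S := by simp [hP]
    rwa [e]
  · have e : (⋃ (_ : P), S) = ∅ := by simp [hP]
    rw [e]; exact pn_empty p

lemma pn_decomp {p : ℕ} {S : Set ℤ} (h : IsPNormalZ p S) :
    ∃ (ι : Type) (_ : Fintype ι) (f : ι → Set ℤ),
      (∀ i, (∃ m l, f i = AP m l) ∨ IsElemPNormal p (f i)) ∧ S = ⋃ i, f i := by
  obtain ⟨F, N, T, hT, rfl⟩ := h
  refine ⟨(↥F) ⊕ Fin N, inferInstance,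
    Sum.elim (fun z => AP (z : ℤ × ℤ).1 (z : ℤ × ℤ).2) T, ?_, ?_⟩
  · rintro (z | i)
    · exact Or.inl ⟨_, _, rfl⟩
    · exact Or.inr (hT i)
  · ext x
    simp only [Set.mem_union, Set.mem_iUnion, Sum.exists, Sum.elim_inl, Sum.elim_inr,
      Subtype.exists, AP, Set.mem_setOf_eq, exists_prop]

lemma ap_inter_ap (p : ℕ) (m l m' l' : ℤ) : IsPNormalZ p (AP m l ∩ AP m' l') := by
  by_cases h : (AP m l ∩ AP m' l').Nonempty
  · obtain ⟨x0, hx1, hx2⟩ := h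
    rw [mem_AP] at hx1 hx2
    have heq : AP m l ∩ AP m' l' = AP (Int.lcm m m') x0 := by
      ext x
      simp only [Set.mem_inter_iff, mem_AP]
      constructor
      · rintro ⟨h1, h2⟩
        have d1 : m ∣ x - x0 := by
          have := dvd_sub h1 hx1
          rwa [show x - l - (x0 - l) = x - x0 by ring] at this
        have d2 : m' ∣ x - x0 := by
          have := dvd_sub h2 hx2
          rwa [show x - l' - (x0 - l') = x - x0 by ring] at this
        exact Int.coe_lcm_dvd d1 d2
      · intro hdl
        have d1 : m ∣ x - x0 := dvd_trans (Int.dvd_lcm_left m m') hdl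
        have d2 : m' ∣ x - x0 := dvd_trans (Int.dvd_lcm_right m m') hdl
        constructor
        · have := dvd_add d1 hx1
          rwa [show x - x0 + (x0 - l) = x - l by ring] at this
        · have := dvd_add d2 hx2
          rwa [show x - x0 + (x0 - l') = x - l' by ring] at this
    rw [heq]
    exact pn_ap p _ _
  · rw [Set.not_nonempty_iff_eq_empty.mp h]
    exact pn_empty p



lemma complete (q : ℤ) (hq : 2 ≤ q) {ι : Type} [Fintype ι] [DecidableEq ι]
    (a : ι → ℤ) (A : ℤ) (G0 : ℕ) (hG : 1 ≤ G0)
    (hbig : |A| + ∑ k, |a k| < q ^ G0) :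
    ∀ (E : Finset ι) (tt : ι → ℕ), (∑ k ∈ E, a k * q ^ tt k = A) →
      ∃ (γ : ι → ℕ) (j : ι → Option ι) (s : ι → ℕ),
        (∀ k ∈ E, γ k ≤ G0 * (Fintype.card ι + 1)) ∧
        (∀ k ∈ E, ∀ c, j k = some c → c ∈ E) ∧
        (∑ k ∈ E.filter (fun k => j k = none), a k * q ^ γ k = A) ∧
        (∀ c : ι, ∑ k ∈ E.filter (fun k => j k = some c), a k * q ^ γ k = 0) ∧
        (∀ k ∈ E, tt k = γ k + (j k).elim 0 s) := by
  have hq0 : (0 : ℤ) < q := by linarith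
  have hq1 : (1 : ℤ) ≤ q := by linarith
  intro E
  induction E using Finset.strongInduction with
  | _ E IH =>
  intro tt htt
  set K := Fintype.card ι with hK
  set B := G0 * (K + 1) with hB
  by_cases hsmall : ∀ k ∈ E, tt k ≤ B
  · refine ⟨tt, fun _ => none, fun _ => 0, hsmall, by simp, ?_, by simp, by simp⟩
    rw [Finset.filter_true_of_mem (by simp)]
    exact htt
  · push_neg at hsmall
    obtain ⟨k0, hk0E, hk0⟩ := hsmall
    have hEne : E.Nonempty := ⟨k0, hk0E⟩
    obtain ⟨kmax, hkmaxE, hkmax⟩ := Finset.exists_mem_eq_sup E hEne tt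
    set M := E.sup tt with hMdef
    have hMB : B < M := lt_of_lt_of_le hk0 (Finset.le_sup hk0E)
    have hle : ∀ k ∈ E, tt k ≤ M := fun k hk => Finset.le_sup hk
    set Cr : ℕ → Finset ι := fun r => E.filter (fun k => M < tt k + G0 * r) with hCr
    have hmono : ∀ r r', r ≤ r' → Cr r ⊆ Cr r' := by
      intro r r' hrr
      simp only [hCr]
      intro x hx
      rw [Finset.mem_filter] at hx ⊢
      have h1 : G0 * r ≤ G0 * r' := Nat.mul_le_mul_left G0 hrr
      exact ⟨hx.1, by omega⟩
    have h1ne : (Cr 1).Nonempty := by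
      simp only [hCr]
      refine ⟨kmax, Finset.mem_filter.mpr ⟨hkmaxE, ?_⟩⟩
      omega
    have hex : ∃ r, 1 ≤ r ∧ r ≤ K ∧ Cr (r + 1) ⊆ Cr r := by
      by_contra hc
      push_neg at hc
      have grow : ∀ r, 1 ≤ r → r ≤ K + 1 → r ≤ (Cr r).card := by
        intro r
        induction r with
        | zero => omega
        | succ rr ihr =>
          intro _ hrK
          by_cases hrr : 1 ≤ rr
          · have hc1 : rr ≤ (Cr rr).card := ihr hrr (by omega)
            have hss : Cr rr ⊂ Cr (rr + 1) :=
              Finset.ssubset_iff_subset_ne.mpr ⟨hmono rr (rr + 1) (by omega), by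
                intro heq
                exact hc rr hrr (by omega) (le_of_eq heq.symm)⟩
            have := Finset.card_lt_card hss
            omega
          · have h0 : rr = 0 := by omega
            subst h0
            have h1 := Finset.Nonempty.card_pos h1ne
            simp only [Nat.zero_add]
            omega
      have hfin := grow (K + 1) (by omega) (le_refl _)
      have hcard := Finset.card_le_univ (Cr (K + 1))
      omega
    obtain ⟨r, hr1, hrK, hsub⟩ := hex
    set C := Cr r with hCdef
    have hCE : C ⊆ E := Finset.filter_subset _ _
    have hCne : C.Nonempty := (h1ne.mono (hmono 1 r hr1))
    obtain ⟨P, hPdef⟩ : ∃ P, P = G0 * r := ⟨_, rfl⟩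
    have hPB : P + G0 ≤ B := by
      rw [hPdef, hB]
      calc G0 * r + G0 = G0 * (r + 1) := by ring
        _ ≤ G0 * (K + 1) := Nat.mul_le_mul_left G0 (by omega)
    have hCmem : ∀ k, k ∈ C ↔ (k ∈ E ∧ M < tt k + P) := by
      intro k
      rw [hPdef]
      simp only [hCdef, hCr, Finset.mem_filter]
    have hnotC : ∀ k ∈ E, k ∉ C → tt k + P + G0 ≤ M := by
      intro k hkE hkC
      have h2 : k ∉ Cr (r + 1) := fun hk => hkC (hsub hk)
      simp only [hCr, Finset.mem_filter] at h2
      push_neg at h2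
      have h3 := h2 hkE
      have h4 : G0 * (r + 1) = G0 * r + G0 := by ring
      rw [h4, ← hPdef] at h3
      omega
    have hPM : P + G0 ≤ M := le_trans hPB hMB.le
    set s₀ := M - P + 1 with hs₀
    have f1 : ∀ k ∈ C, s₀ ≤ tt k ∧ tt k ≤ M := by
      intro k hk
      have h1 := (hCmem k).mp hk
      have h2 := hle k h1.1
      omega
    have f2 : ∀ k ∈ C, tt k - s₀ ≤ B := by
      intro k hk
      have h1 := f1 k hk
      omega
    have f3 : ∀ k ∈ E, k ∉ C → tt k + G0 + 1 ≤ s₀ := by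
      intro k hkE hkC
      have := hnotC k hkE hkC
      omega
    have f4 : G0 + 1 ≤ s₀ := by omega
    set Y := ∑ k ∈ C, a k * q ^ (tt k - s₀) with hY
    have hC : ∑ k ∈ C, a k * q ^ tt k = q ^ s₀ * Y := by
      rw [hY, Finset.mul_sum]
      apply Finset.sum_congr rfl
      intro k hk
      have h2 : q ^ tt k = q ^ s₀ * q ^ (tt k - s₀) := by
        rw [← pow_add]; congr 1
        have := f1 k hk; omega
      rw [h2]; ring
    set R := ∑ k ∈ E \ C, a k * q ^ tt k with hR
    have hER : q ^ s₀ * Y + R = A := by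
      rw [← hC, ← htt, ← Finset.sum_sdiff hCE]
      ring
    have hRbound : |R| ≤ (∑ k, |a k|) * q ^ (s₀ - 1 - G0) := by
      calc |R| ≤ ∑ k ∈ E \ C, |a k * q ^ tt k| := Finset.abs_sum_le_sum_abs _ _
        _ = ∑ k ∈ E \ C, |a k| * q ^ tt k := by
            apply Finset.sum_congr rfl
            intro k _
            rw [abs_mul, abs_pow, abs_of_nonneg hq0.le]
        _ ≤ ∑ k ∈ E \ C, |a k| * q ^ (s₀ - 1 - G0) := by
            apply Finset.sum_le_sum
            intro k hk
            rw [Finset.mem_sdiff] at hk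
            have h1 := f3 k hk.1 hk.2
            exact mul_le_mul_of_nonneg_left (pow_le_pow_right₀ hq1 (by omega)) (abs_nonneg _)
        _ ≤ ∑ k ∈ Finset.univ, |a k| * q ^ (s₀ - 1 - G0) := by
            apply Finset.sum_le_sum_of_subset_of_nonneg (Finset.subset_univ _)
            intro k _ _
            exact mul_nonneg (abs_nonneg _) (pow_nonneg hq0.le _)
        _ = (∑ k, |a k|) * q ^ (s₀ - 1 - G0) := by rw [Finset.sum_mul]
    have hYzero : Y = 0 := by
      by_contra hY0
      have h1 : (1 : ℤ) ≤ |Y| := Int.one_le_abs (by omega)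
      have hXpos : (0 : ℤ) < q ^ (s₀ - 1 - G0) := pow_pos hq0 _
      have hX1 : (1 : ℤ) ≤ q ^ (s₀ - 1 - G0) := by
        calc (1 : ℤ) = 1 ^ (s₀ - 1 - G0) := (one_pow _).symm
          _ ≤ q ^ (s₀ - 1 - G0) := pow_le_pow_left₀ (by norm_num) hq1 _
      have h6 : (q : ℤ) ^ G0 * q ^ (s₀ - 1 - G0) = q ^ (s₀ - 1) := by
        rw [← pow_add]; congr 1; omega
      have h7 : (q : ℤ) ^ (s₀ - 1) * q = q ^ s₀ := by
        have e : s₀ - 1 + 1 = s₀ := by omega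
        rw [← pow_succ, e]
      have hcontr : (q : ℤ) ^ s₀ < q ^ s₀ := by
        calc (q : ℤ) ^ s₀ ≤ q ^ s₀ * |Y| :=
              le_mul_of_one_le_right (pow_nonneg hq0.le _) h1
          _ = |q ^ s₀ * Y| := by rw [abs_mul, abs_pow, abs_of_nonneg hq0.le]
          _ = |A - R| := by rw [show q ^ s₀ * Y = A - R by linarith]
          _ ≤ |A| + |R| := by
              rw [sub_eq_add_neg]
              exact (abs_add_le A (-R)).trans (by rw [abs_neg])
          _ ≤ |A| + (∑ k, |a k|) * q ^ (s₀ - 1 - G0) := by linarith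
          _ ≤ |A| * q ^ (s₀ - 1 - G0) + (∑ k, |a k|) * q ^ (s₀ - 1 - G0) := by
              have := le_mul_of_one_le_right (abs_nonneg A) hX1
              linarith
          _ = (|A| + ∑ k, |a k|) * q ^ (s₀ - 1 - G0) := by ring
          _ < q ^ G0 * q ^ (s₀ - 1 - G0) := mul_lt_mul_of_pos_right hbig hXpos
          _ = q ^ (s₀ - 1) := h6
          _ < q ^ s₀ := by nlinarith [pow_pos hq0 (s₀ - 1)]
      exact absurd hcontr (lt_irrefl _)
    have hrest : ∑ k ∈ E \ C, a k * q ^ tt k = A := by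
      have h1 := hER
      rw [hYzero, mul_zero, zero_add] at h1
      exact h1
    have hEC : E \ C ⊂ E := Finset.sdiff_ssubset hCE hCne
    obtain ⟨γ', j', s', hb', hlab', hfix', hclus', hshape'⟩ := IH (E \ C) hEC tt hrest
    obtain ⟨c₀, hc₀⟩ := hCne
    set γn : ι → ℕ := fun k => if k ∈ C then tt k - s₀ else γ' k with hγn
    set jn : ι → Option ι := fun k => if k ∈ C then some c₀ else j' k with hjn
    set sn : ι → ℕ := fun c => if c = c₀ then s₀ else s' c with hsn
    refine ⟨γn, jn, sn, ?_, ?_, ?_, ?_, ?_⟩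
    · intro k hk
      simp only [hγn]
      by_cases hkC : k ∈ C
      · rw [if_pos hkC]
        exact f2 k hkC
      · rw [if_neg hkC]
        exact hb' k (Finset.mem_sdiff.mpr ⟨hk, hkC⟩)
    · intro k hk c hc
      simp only [hjn] at hc
      by_cases hkC : k ∈ C
      · rw [if_pos hkC] at hc
        have hceq : c₀ = c := by injection hc
        rw [← hceq]
        exact hCE hc₀
      · rw [if_neg hkC] at hc
        exact Finset.sdiff_subset (hlab' k (Finset.mem_sdiff.mpr ⟨hk, hkC⟩) c hc)
    · have hfeq : E.filter (fun k => jn k = none) =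
          (E \ C).filter (fun k => j' k = none) := by
        ext k
        simp only [Finset.mem_filter, Finset.mem_sdiff, hjn]
        constructor
        · rintro ⟨hkE, hj⟩
          by_cases hkC : k ∈ C
          · rw [if_pos hkC] at hj; exact absurd hj (by simp)
          · rw [if_neg hkC] at hj; exact ⟨⟨hkE, hkC⟩, hj⟩
        · rintro ⟨⟨hkE, hkC⟩, hj⟩
          exact ⟨hkE, by rw [if_neg hkC]; exact hj⟩
      rw [hfeq, ← hfix']
      apply Finset.sum_congr rfl
      intro k hk
      have hkC : k ∉ C := (Finset.mem_sdiff.mp (Finset.mem_filter.mp hk).1).2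
      simp only [hγn]
      rw [if_neg hkC]
    · intro c
      by_cases hcc : c = c₀
      · have hfeq : E.filter (fun k => jn k = some c) = C := by
          ext k
          simp only [Finset.mem_filter, hjn]
          constructor
          · rintro ⟨hkE, hj⟩
            by_cases hkC : k ∈ C
            · exact hkC
            · rw [if_neg hkC] at hj
              have hmem := hlab' k (Finset.mem_sdiff.mpr ⟨hkE, hkC⟩) c hj
              have : c ∉ C := (Finset.mem_sdiff.mp hmem).2
              rw [hcc] at this
              exact absurd hc₀ this
          · intro hkC
            refine ⟨hCE hkC, ?_⟩
            rw [if_pos hkC, hcc]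
        rw [hfeq]
        have hsc : ∑ k ∈ C, a k * q ^ γn k = Y := by
          rw [hY]
          apply Finset.sum_congr rfl
          intro k hk
          simp only [hγn]
          rw [if_pos hk]
        rw [hsc]
        exact hYzero
      · have hfeq : E.filter (fun k => jn k = some c) =
            (E \ C).filter (fun k => j' k = some c) := by
          ext k
          simp only [Finset.mem_filter, Finset.mem_sdiff, hjn]
          constructor
          · rintro ⟨hkE, hj⟩
            by_cases hkC : k ∈ C
            · rw [if_pos hkC] at hj
              have : c₀ = c := by injection hj
              exact absurd this.symm hcc
            · rw [if_neg hkC] at hj; exact ⟨⟨hkE, hkC⟩, hj⟩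
          · rintro ⟨⟨hkE, hkC⟩, hj⟩
            exact ⟨hkE, by rw [if_neg hkC]; exact hj⟩
        rw [hfeq, ← hclus' c]
        apply Finset.sum_congr rfl
        intro k hk
        have hkC : k ∉ C := (Finset.mem_sdiff.mp (Finset.mem_filter.mp hk).1).2
        simp only [hγn]
        rw [if_neg hkC]
    · intro k hk
      simp only [hγn, hjn]
      by_cases hkC : k ∈ C
      · rw [if_pos hkC, if_pos hkC]
        have := f1 k hkC
        simp only [Option.elim, hsn]
        simp only [eq_self_iff_true, if_true]
        omega
      · rw [if_neg hkC, if_neg hkC]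
        have hsh := hshape' k (Finset.mem_sdiff.mpr ⟨hk, hkC⟩)
        rw [hsh]
        congr 1
        rcases hjk : j' k with _ | c
        · rfl
        · simp only [Option.elim, hsn]
          have hcE : c ∈ E \ C := hlab' k (Finset.mem_sdiff.mpr ⟨hk, hkC⟩) c hjk
          have hcne : c ≠ c₀ := by
            intro hceq
            subst hceq
            exact (Finset.mem_sdiff.mp hcE).2 hc₀
          rw [if_neg hcne]


lemma key (q : ℤ) (hq : 2 ≤ q) {ι : Type} [Fintype ι] [DecidableEq ι] (a : ι → ℤ) (A : ℤ) :
    ∃ G : Finset ((ι → ℕ) × (ι → Option ι)),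
      (∀ gj ∈ G, ∀ s : ι → ℕ, ∑ k, a k * q ^ (gj.1 k + (gj.2 k).elim 0 s) = A) ∧
      ∀ tt : ι → ℕ, (∑ k, a k * q ^ tt k = A) →
        ∃ gj ∈ G, ∃ s : ι → ℕ, ∀ k, tt k = gj.1 k + (gj.2 k).elim 0 s := by
  classical
  set W : ℤ := |A| + ∑ k, |a k| with hW
  have hW0 : 0 ≤ W := add_nonneg (abs_nonneg _) (Finset.sum_nonneg fun k _ => abs_nonneg _)
  set G0 : ℕ := W.toNat + 1 with hG0
  have hbig : W < q ^ G0 := by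
    have h1 : W < (G0 : ℤ) := by
      rw [hG0]; push_cast; rw [Int.toNat_of_nonneg hW0]; linarith
    have h2 : (G0 : ℤ) < 2 ^ G0 := by exact_mod_cast Nat.lt_two_pow_self
    have h3 : (2 : ℤ) ^ G0 ≤ q ^ G0 := pow_le_pow_left₀ (by norm_num) hq G0
    linarith
  set B := G0 * (Fintype.card ι + 1) with hB
  set GoodSet : Set ((ι → ℕ) × (ι → Option ι)) :=
    {gj | (∀ k, gj.1 k ≤ B) ∧ ∀ s : ι → ℕ, ∑ k, a k * q ^ (gj.1 k + (gj.2 k).elim 0 s) = A}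
    with hGoodSet
  have hfin : GoodSet.Finite := by
    apply Set.Finite.subset
      (Set.Finite.prod (Set.Finite.pi (fun _ : ι => Set.finite_Iic B))
        (Set.finite_univ : (Set.univ : Set (ι → Option ι)).Finite))
    rintro ⟨γ, j⟩ ⟨h1, _⟩
    constructor
    · rw [Set.mem_pi]
      intro k _
      exact h1 k
    · trivial
  refine ⟨hfin.toFinset, ?_, ?_⟩
  · intro gj hgj s
    rw [Set.Finite.mem_toFinset] at hgj
    exact hgj.2 s
  · intro tt htt
    obtain ⟨γ, j, s, hb, hlab, hfix, hclus, hshape⟩ :=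
      complete q hq a A G0 (by omega) hbig Finset.univ tt htt
    have hGood : ∀ s' : ι → ℕ, ∑ k, a k * q ^ (γ k + (j k).elim 0 s') = A := by
      intro s'
      have hf := Finset.sum_fiberwise (Finset.univ : Finset ι) j
        (fun k => a k * q ^ (γ k + (j k).elim 0 s'))
      rw [← hf, Fintype.sum_option]
      have hnone : ∑ k ∈ Finset.univ.filter (fun k => j k = none),
          a k * q ^ (γ k + (j k).elim 0 s') = A := by
        rw [← hfix]
        apply Finset.sum_congr rfl
        intro k hk
        have h0 : j k = none := (Finset.mem_filter.mp hk).2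
        rw [h0]
        simp
      have hsome : ∀ c : ι, ∑ k ∈ Finset.univ.filter (fun k => j k = some c),
          a k * q ^ (γ k + (j k).elim 0 s') = 0 := by
        intro c
        have h1 : ∀ k ∈ Finset.univ.filter (fun k => j k = some c),
            a k * q ^ (γ k + (j k).elim 0 s') = (a k * q ^ γ k) * q ^ s' c := by
          intro k hk
          have h0 : j k = some c := (Finset.mem_filter.mp hk).2
          rw [h0]
          simp only [Option.elim]
          rw [pow_add]
          ring
        rw [Finset.sum_congr rfl h1, ← Finset.sum_mul, hclus c, zero_mul]
      rw [hnone, Finset.sum_congr rfl (fun c _ => hsome c), Finset.sum_const_zero, add_zero]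
    refine ⟨(γ, j), ?_, s, fun k => hshape k (Finset.mem_univ k)⟩
    rw [Set.Finite.mem_toFinset]
    exact ⟨fun k => hb k (Finset.mem_univ k), hGood⟩

def E0 (q : ℤ) {d1 d2 : ℕ} (a0 : ℤ) (a : Fin d1 → ℤ)
    (gj : (Fin d1 ⊕ Fin d2 → ℕ) × (Fin d1 ⊕ Fin d2 → Option (Fin d1 ⊕ Fin d2))) : ℤ :=
  a0 + ∑ i : Fin d1, if gj.2 (Sum.inl i) = none then a i * q ^ gj.1 (Sum.inl i) else 0

def ECoef (q : ℤ) {d1 d2 : ℕ} (a : Fin d1 → ℤ)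
    (gj : (Fin d1 ⊕ Fin d2 → ℕ) × (Fin d1 ⊕ Fin d2 → Option (Fin d1 ⊕ Fin d2)))
    (c : Fin d1 ⊕ Fin d2) : ℤ :=
  ∑ i : Fin d1, if gj.2 (Sum.inl i) = some c then a i * q ^ gj.1 (Sum.inl i) else 0

lemma collect (q : ℤ) {d1 d2 : ℕ} (a0 : ℤ) (a : Fin d1 → ℤ)
    (γ : Fin d1 ⊕ Fin d2 → ℕ) (j : Fin d1 ⊕ Fin d2 → Option (Fin d1 ⊕ Fin d2))
    (s : Fin d1 ⊕ Fin d2 → ℕ) :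
    E0 q a0 a (γ, j) + ∑ c, ECoef q a (γ, j) c * q ^ s c =
      a0 + ∑ i, a i * q ^ (γ (Sum.inl i) + (j (Sum.inl i)).elim 0 s) := by
  have h1 : ∑ c, ECoef q a (γ, j) c * q ^ s c =
      ∑ i : Fin d1, ∑ c : Fin d1 ⊕ Fin d2,
        (if j (Sum.inl i) = some c then a i * q ^ γ (Sum.inl i) * q ^ s c else 0) := by
    simp only [ECoef, Finset.sum_mul, ite_mul, zero_mul]
    exact Finset.sum_comm
  rw [E0, h1, add_assoc, ← Finset.sum_add_distrib]
  congr 1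
  apply Finset.sum_congr rfl
  intro i _
  rcases hj : j (Sum.inl i) with _ | c0
  · simp [hj]
  · simp only [hj, reduceCtorEq, if_false, zero_add, Option.elim]
    have h2 : ∀ c : Fin d1 ⊕ Fin d2,
        (if some c0 = some c then a i * q ^ γ (Sum.inl i) * q ^ s c else 0) =
        (if c0 = c then a i * q ^ γ (Sum.inl i) * q ^ s c else 0) := by
      intro c
      simp
    rw [Finset.sum_congr rfl fun c _ => h2 c, Finset.sum_ite_eq]
    simp [pow_add]
    ring

lemma E0_dvd (q : ℤ) {d1 d2 : ℕ} (a0 : ℤ) (a : Fin d1 → ℤ)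
    (hdvd : (q - 1) ∣ a0 + ∑ i, a i)
    (gj : (Fin d1 ⊕ Fin d2 → ℕ) × (Fin d1 ⊕ Fin d2 → Option (Fin d1 ⊕ Fin d2))) :
    (q - 1) ∣ E0 q a0 a gj + ∑ c, ECoef q a gj c := by
  have h := collect q a0 a gj.1 gj.2 (fun _ => 0)
  simp only [pow_zero, mul_one] at h
  rw [show gj = (gj.1, gj.2) from rfl] at *
  rw [h]
  exact dvd_shift q a0 a _ hdvd

lemma elem_inter_elem_core (q : ℤ) (hq : 2 ≤ q) {d1 d2 : ℕ} (a0 b0 : ℤ)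
    (a : Fin d1 → ℤ) (b : Fin d2 → ℤ) :
    ∃ G : Finset ((Fin d1 ⊕ Fin d2 → ℕ) × (Fin d1 ⊕ Fin d2 → Option (Fin d1 ⊕ Fin d2))),
      Elem q a0 a ∩ Elem q b0 b = ⋃ gj ∈ G, Elem q (E0 q a0 a gj) (ECoef q a gj) := by
  obtain ⟨G, hGval, hGcomp⟩ := key q hq (Sum.elim a (fun k2 => - b k2)) (b0 - a0)
  refine ⟨G, ?_⟩
  ext x
  simp only [Set.mem_inter_iff, Set.mem_iUnion, Elem, Set.mem_setOf_eq]
  constructor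
  · rintro ⟨⟨n, hn⟩, ⟨mm, hmm⟩⟩
    have htt : ∑ k, Sum.elim a (fun k2 => - b k2) k * q ^ (Sum.elim n mm) k = b0 - a0 := by
      rw [Fintype.sum_sum_type]
      simp only [Sum.elim_inl, Sum.elim_inr]
      have e1 : ∑ i : Fin d1, a i * q ^ n i = (q - 1) * x - a0 := by rw [hn]; ring
      have e2 : ∑ k : Fin d2, - b k * q ^ mm k = -((q - 1) * x - b0) := by
        have e3 : ∑ k : Fin d2, - b k * q ^ mm k = -(∑ k, b k * q ^ mm k) := by
          rw [← Finset.sum_neg_distrib]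
          exact Finset.sum_congr rfl fun k _ => by ring
        rw [e3, hmm]; ring
      rw [e1, e2]; ring
    obtain ⟨gj, hgjG, s, hs⟩ := hGcomp _ htt
    refine ⟨gj, hgjG, s, ?_⟩
    rcases gj with ⟨γ, j⟩
    rw [collect, hn]
    congr 1
    apply Finset.sum_congr rfl
    intro i _
    have := hs (Sum.inl i)
    simp only [Sum.elim_inl] at this
    rw [← this]
  · rintro ⟨⟨γ, j⟩, hgjG, s, hx⟩
    rw [collect] at hx
    have hval := hGval (γ, j) hgjG s
    rw [Fintype.sum_sum_type] at hval
    simp only [Sum.elim_inl, Sum.elim_inr] at hval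
    have hnegsum : ∑ k : Fin d2, - b k * q ^ (γ (Sum.inr k) + (j (Sum.inr k)).elim 0 s) =
        -(∑ k : Fin d2, b k * q ^ (γ (Sum.inr k) + (j (Sum.inr k)).elim 0 s)) := by
      rw [← Finset.sum_neg_distrib]
      exact Finset.sum_congr rfl fun k _ => by ring
    constructor
    · exact ⟨fun i => γ (Sum.inl i) + (j (Sum.inl i)).elim 0 s, hx⟩
    · refine ⟨fun k => γ (Sum.inr k) + (j (Sum.inr k)).elim 0 s, ?_⟩
      rw [hnegsum] at hval
      linarith [hx, hval]

lemma elem_reindex (q c0 : ℤ) {ι κ : Type} [Fintype ι] [Fintype κ] (E : ι ≃ κ) (c : κ → ℤ) :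
    Elem q c0 (c ∘ E) = Elem q c0 c := by
  ext x
  simp only [Elem, Set.mem_setOf_eq, Function.comp]
  constructor
  · rintro ⟨n, hn⟩
    refine ⟨n ∘ E.symm, ?_⟩
    rw [hn]
    congr 1
    calc ∑ i, c (E i) * q ^ n i
        = ∑ i, c (E i) * q ^ n (E.symm (E i)) := by
          apply Finset.sum_congr rfl
          intro i _
          rw [Equiv.symm_apply_apply]
      _ = ∑ k, c k * q ^ n (E.symm k) :=
          Equiv.sum_comp E (fun k => c k * q ^ n (E.symm k))
  · rintro ⟨n, hn⟩
    refine ⟨n ∘ E, ?_⟩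
    rw [hn]
    congr 1
    exact (Equiv.sum_comp E (fun k => c k * q ^ n k)).symm

lemma elem_pn {p : ℕ} (hp2 : 2 ≤ p) {e d : ℕ} (he : 1 ≤ e) (hd : 1 ≤ d) (c0 : ℤ)
    (c : Fin d → ℤ) (hdvd : (((p : ℤ) ^ e) - 1) ∣ c0 + ∑ i, c i) :
    IsPNormalZ p (Elem ((p : ℤ) ^ e) c0 c) :=
  pn_elem (isElemPNormal_iff.mpr ⟨e, d, c0, c, he, hd, hdvd, rfl⟩)

lemma elem_pn' {p : ℕ} (hp2 : 2 ≤ p) {e : ℕ} (he : 1 ≤ e) {ι : Type} [Fintype ι] [Nonempty ι]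
    (c0 : ℤ) (c : ι → ℤ) (hdvd : (((p : ℤ) ^ e) - 1) ∣ c0 + ∑ i, c i) :
    IsPNormalZ p (Elem ((p : ℤ) ^ e) c0 c) := by
  have hd : 1 ≤ Fintype.card ι := Fintype.card_pos
  set E : Fin (Fintype.card ι) ≃ ι := (Fintype.equivFin ι).symm with hE
  have h1 : Elem ((p : ℤ) ^ e) c0 c = Elem ((p : ℤ) ^ e) c0 (c ∘ E) :=
    (elem_reindex _ _ E c).symm
  rw [h1]
  apply elem_pn hp2 he hd
  have h2 : ∑ i, (c ∘ E) i = ∑ k, c k := Equiv.sum_comp E c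
  rwa [h2]

lemma ap_inter_elem {p : ℕ} (hp2 : 2 ≤ p) (m l : ℤ) {e d : ℕ} (he : 1 ≤ e) (hd : 1 ≤ d)
    (c0 : ℤ) (c : Fin d → ℤ) (hdvd : (((p : ℤ) ^ e) - 1) ∣ c0 + ∑ i, c i) :
    IsPNormalZ p (AP m l ∩ Elem ((p : ℤ) ^ e) c0 c) := by
  have hq2 : 2 ≤ ((p : ℤ) ^ e) := by
    calc (2 : ℤ) ≤ (p : ℤ) := by exact_mod_cast hp2
      _ ≤ (p : ℤ) ^ e := le_self_pow₀ (by exact_mod_cast le_trans one_le_two hp2) (by omega)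
  set q : ℤ := (p : ℤ) ^ e with hqdef
  by_cases hm : m = 0
  · subst hm
    have hAP : AP 0 l = {l} := by
      ext x
      simp [AP, eq_comm]
    rw [hAP]
    by_cases hl : l ∈ Elem q c0 c
    · rw [Set.inter_eq_self_of_subset_left (Set.singleton_subset_iff.mpr hl)]
      rw [← hAP]
      exact pn_ap p 0 l
    · rw [Set.singleton_inter_eq_empty.mpr hl]
      exact pn_empty p
  · have hq1 : q - 1 ≠ 0 := by
      intro h0
      have : q = 1 := by linarith
      rw [this] at hq2
      norm_num at hq2
    have hM0 : (q - 1) * m ≠ 0 := mul_ne_zero hq1 hm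
    obtain ⟨V, t, ht, hper⟩ := exists_period q ((q - 1) * m) hM0
    have hset : AP m l = {x : ℤ | (q - 1) * m ∣ ((q - 1) * x - (q - 1) * l)} := by
      ext x
      rw [mem_AP, Set.mem_setOf_eq]
      rw [show (q - 1) * x - (q - 1) * l = (q - 1) * (x - l) by ring]
      exact (mul_dvd_mul_iff_left hq1).symm
    rw [Set.inter_comm, hset, master q hq2 c0 c ((q - 1) * m) ((q - 1) * l) V t ht hper]
    apply pn_iUnion
    intro σ
    apply pn_iUnion_prop
    have hpow : q ^ t = (p : ℤ) ^ (e * t) := by rw [hqdef, ← pow_mul]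
    rw [hpow]
    apply elem_pn hp2 (Nat.mul_pos (by omega) (by omega) : 0 < e * t) hd
    rw [← hpow]
    exact master_dvd q c0 c V t hdvd σ

lemma elem_inter_elem_pn {p : ℕ} (hp2 : 2 ≤ p) {e1 d1 e2 d2 : ℕ}
    (he1 : 1 ≤ e1) (hd1 : 1 ≤ d1) (he2 : 1 ≤ e2) (hd2 : 1 ≤ d2)
    (a0 : ℤ) (a : Fin d1 → ℤ) (b0 : ℤ) (b : Fin d2 → ℤ)
    (hdva : (((p : ℤ) ^ e1) - 1) ∣ a0 + ∑ i, a i)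
    (hdvb : (((p : ℤ) ^ e2) - 1) ∣ b0 + ∑ i, b i) :
    IsPNormalZ p (Elem ((p : ℤ) ^ e1) a0 a ∩ Elem ((p : ℤ) ^ e2) b0 b) := by
  have hp2' : (2 : ℤ) ≤ (p : ℤ) := by exact_mod_cast hp2
  have hp1' : (1 : ℤ) ≤ (p : ℤ) := le_trans one_le_two hp2'
  have hq1 : 2 ≤ ((p : ℤ) ^ e1) := by
    calc (2 : ℤ) ≤ (p : ℤ) := hp2'
      _ ≤ (p : ℤ) ^ e1 := le_self_pow₀ hp1' (by omega)
  have hq2 : 2 ≤ ((p : ℤ) ^ e2) := by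
    calc (2 : ℤ) ≤ (p : ℤ) := hp2'
      _ ≤ (p : ℤ) ^ e2 := le_self_pow₀ hp1' (by omega)
  have hQ : 2 ≤ ((p : ℤ) ^ (e1 * e2)) := by
    calc (2 : ℤ) ≤ (p : ℤ) := hp2'
      _ ≤ (p : ℤ) ^ (e1 * e2) := le_self_pow₀ hp1' (Nat.mul_ne_zero (by omega) (by omega))
  have huniv : ∀ (w : ℤ), {x : ℤ | (1 : ℤ) ∣ (w * x - 0)} = Set.univ :=
    fun w => Set.eq_univ_of_forall (fun x => one_dvd _)
  have hrb : ∀ (e d : ℕ), 1 ≤ e → ∀ (t : ℕ), 1 ≤ t → ∀ (c0 : ℤ) (c : Fin d → ℤ),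
      Elem ((p : ℤ) ^ e) c0 c =
      ⋃ σ : Fin d → Fin 0 ⊕ Fin t,
        ⋃ (_ : (1 : ℤ) ∣ (c0 + (∑ i, c i * ((p : ℤ) ^ e) ^ shE 0 t (σ i)) - 0)),
          Elem (((p : ℤ) ^ e) ^ t) (C0v ((p : ℤ) ^ e) 0 t c0 c σ)
            (CCv ((p : ℤ) ^ e) 0 t c σ) := by
    intro e d he t ht c0 c
    have hqe : 2 ≤ ((p : ℤ) ^ e) := by
      calc (2 : ℤ) ≤ (p : ℤ) := hp2'
        _ ≤ (p : ℤ) ^ e := le_self_pow₀ hp1' (by omega)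
    have h0 : Elem ((p : ℤ) ^ e) c0 c =
        Elem ((p : ℤ) ^ e) c0 c ∩ {x : ℤ | (1 : ℤ) ∣ (((p : ℤ) ^ e - 1) * x - 0)} := by
      rw [huniv, Set.inter_univ]
    rw [h0, master ((p : ℤ) ^ e) hqe c0 c 1 0 0 t ht (one_dvd _)]
  rw [hrb e1 d1 he1 e2 he2 a0 a, hrb e2 d2 he2 e1 he1 b0 b]
  rw [Set.iUnion_inter]
  apply pn_iUnion
  intro σ
  rw [Set.iUnion_inter]
  apply pn_iUnion_prop
  rw [Set.inter_iUnion]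
  apply pn_iUnion
  intro τ
  rw [Set.inter_iUnion]
  apply pn_iUnion_prop
  have hdva' : (((p : ℤ) ^ e1) ^ e2 - 1) ∣
      C0v ((p : ℤ) ^ e1) 0 e2 a0 a σ + ∑ i, CCv ((p : ℤ) ^ e1) 0 e2 a σ i :=
    master_dvd _ a0 a 0 e2 hdva σ
  have hQ1 : ((p : ℤ) ^ e1) ^ e2 = (p : ℤ) ^ (e1 * e2) := by rw [← pow_mul]
  have hQ2 : ((p : ℤ) ^ e2) ^ e1 = (p : ℤ) ^ (e1 * e2) := by rw [← pow_mul, Nat.mul_comm]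
  rw [hQ1, hQ2]
  rw [hQ1] at hdva'
  obtain ⟨G, hGeq⟩ := elem_inter_elem_core ((p : ℤ) ^ (e1 * e2)) hQ
    (C0v ((p : ℤ) ^ e1) 0 e2 a0 a σ) (C0v ((p : ℤ) ^ e2) 0 e1 b0 b τ)
    (CCv ((p : ℤ) ^ e1) 0 e2 a σ) (CCv ((p : ℤ) ^ e2) 0 e1 b τ)
  rw [hGeq]
  apply pn_biUnionF
  intro gj hgj
  haveI : Nonempty (Fin d1) := Fin.pos_iff_nonempty.mp (by omega)
  apply elem_pn' hp2 (Nat.mul_pos (by omega) (by omega) : 0 < e1 * e2)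
  exact E0_dvd _ _ _ hdva' gj

lemma piece_inter {p : ℕ} (hp2 : 2 ≤ p) {U V : Set ℤ}
    (hU : (∃ m l, U = AP m l) ∨ IsElemPNormal p U)
    (hV : (∃ m l, V = AP m l) ∨ IsElemPNormal p V) :
    IsPNormalZ p (U ∩ V) := by
  rcases hU with ⟨m, l, rfl⟩ | hU
  · rcases hV with ⟨m', l', rfl⟩ | hV
    · exact ap_inter_ap p m l m' l'
    · obtain ⟨e, d, c0, c, he, hd, hdvd, hE⟩ := isElemPNormal_iff.mp hV
      rw [hE]
      exact ap_inter_elem hp2 m l he hd c0 c hdvd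
  · rcases hV with ⟨m', l', rfl⟩ | hV
    · obtain ⟨e, d, c0, c, he, hd, hdvd, hE⟩ := isElemPNormal_iff.mp hU
      rw [hE, Set.inter_comm]
      exact ap_inter_elem hp2 m' l' he hd c0 c hdvd
    · obtain ⟨e1, d1, a0, a, he1, hd1, hdva, hEa⟩ := isElemPNormal_iff.mp hU
      obtain ⟨e2, d2, b0, b, he2, hd2, hdvb, hEb⟩ := isElemPNormal_iff.mp hV
      rw [hEa, hEb]
      exact elem_inter_elem_pn hp2 he1 hd1 he2 hd2 a0 a b0 b hdva hdvb

end PNAux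

theorem stmt8 (p : ℕ) (hp : p.Prime) (S T : Set ℤ)
    (hS : IsPNormalZ p S) (hT : IsPNormalZ p T) :
    IsPNormalZ p (S ∩ T) := by
  have hp2 : 2 ≤ p := hp.two_le
  obtain ⟨ι, hι, f, hf, rfl⟩ := PNAux.pn_decomp hS
  obtain ⟨κ, hκ, g, hg, rfl⟩ := PNAux.pn_decomp hT
  rw [Set.iUnion_inter]
  apply PNAux.pn_iUnion
  intro i
  rw [Set.inter_iUnion]
  apply PNAux.pn_iUnion
  intro j
  exact PNAux.piece_inter hp2 (hf i) (hg j)
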